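/- Under Hypothesis (H), let δ = det H(Q) and let B, b in k[x,y] be such that deg_y(B) < d_y^-, deg_y(b) < d_y*, and P/Q = D_y(B/(δ·Q^-)) + b/(δ·Q*) (i.e., B = δ·A and b = δ·a for the unique Hermite decomposition pair (A,a) over k(x)). Let x_0 in k be lucky for Q. Then δ(x_0) ≠ 0, and (B(x_0,y), b(x_0,y)) is the unique pair of polynomials in k[y] of degrees less than d_y^- and d_y* respectively such that P(x_0,y)/Q(x_0,y) = D_y( B(x_0,y)/(δ(x_0)·Q^-(x_0,y)) ) + b(x_0,y)/(δ(x_0)·Q*(x_0,y)). -/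

import Mathlib

open Polynomial

noncomputable section

/-- A map is a derivation: it is additive and satisfies the Leibniz rule. -/
def IsDeriv {F : Type*} [CommRing F] (D : F → F) : Prop :=
  (∀ a b, D (a + b) = D a + D b) ∧ ∀ a b, D (a * b) = a * D b + b * D a

/-- Degree in `x` of an element of `k[x][y]` (inner variable `x`, outer variable `y`). -/
def degX {k : Type*} [Field k] (Q : Polynomial (Polynomial k)) : ℕ :=
  Q.support.sup fun i => (Q.coeff i).natDegree

/-- Partial derivative with respect to `x` on `k[x][y]`. -/
def derivX {k : Type*} [Field k] (Q : Polynomial (Polynomial k)) : Polynomial (Polynomial k) :=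
  Q.sum fun i a => Polynomial.C (Polynomial.derivative a) * Polynomial.X ^ i

/-- The embedding `k[x][y] → k(x)(y)`. -/
def toF {k : Type*} [Field k] : Polynomial (Polynomial k) →+* RatFunc (RatFunc k) :=
  (algebraMap (Polynomial (RatFunc k)) (RatFunc (RatFunc k))).comp
    (Polynomial.mapRingHom (algebraMap (Polynomial k) (RatFunc k)))

/-- The embedding `k(x) → k(x)(y)`. -/
def ratToF {k : Type*} [Field k] : RatFunc k →+* RatFunc (RatFunc k) :=
  (algebraMap (Polynomial (RatFunc k)) (RatFunc (RatFunc k))).comp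
    (Polynomial.C : RatFunc k →+* Polynomial (RatFunc k))

/-- The embedding `k(x)[y] → k(x)(y)`. -/
def kyToF {k : Type*} [Field k] : Polynomial (RatFunc k) →+* RatFunc (RatFunc k) :=
  algebraMap (Polynomial (RatFunc k)) (RatFunc (RatFunc k))

/-- The embedding `k[x][y] → k(x)[y]`. -/
def toKy {k : Type*} [Field k] : Polynomial (Polynomial k) →+* Polynomial (RatFunc k) :=
  Polynomial.mapRingHom (algebraMap (Polynomial k) (RatFunc k))

/-- The embedding `k[y] → k[x][y]` (a polynomial in `y` viewed in `k[x][y]`). -/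
def yToXY {k : Type*} [Field k] : Polynomial k →+* Polynomial (Polynomial k) :=
  Polynomial.mapRingHom (Polynomial.C : k →+* Polynomial k)

/-- The Hermite matrix associated with a factorisation `Q = Qs * Qneg`, with respect to the
monomial bases: its columns are the coefficient vectors (in `y`, coefficients in `k[x]`) of
`Qs * D_y(y^j) - E * y^j` for `j < dm` (where `E = Qs * D_y(Qneg) / Qneg`) and of
`Qneg * y^j` for `j < dy - dm`. -/
def hermiteMat {k : Type*} [Field k] (Qs Qneg E : Polynomial (Polynomial k)) (dy dm : ℕ) :
    Matrix (Fin dy) (Fin dy) (Polynomial k) :=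
  Matrix.of fun i j =>
    if (j : ℕ) < dm then
      (Qs * Polynomial.derivative (Polynomial.X ^ (j : ℕ)) - E * Polynomial.X ^ (j : ℕ)).coeff i
    else
      (Qneg * Polynomial.X ^ ((j : ℕ) - dm)).coeff i

section A
variable {K : Type*} [Field K]

theorem isDeriv_zero (D : RatFunc K → RatFunc K) (hD : IsDeriv D) : D 0 = 0 := by
  simpa using hD.1 0 0

local notation "am" => algebraMap (Polynomial K) (RatFunc K)

theorem am_inj : Function.Injective (algebraMap (Polynomial K) (RatFunc K)) :=
  IsFractionRing.injective _ _

theorem am_ne_zero {p : Polynomial K} (hp : p ≠ 0) : am p ≠ 0 := by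
  intro h
  exact hp (am_inj (by simpa using h))

theorem isDeriv_div (D : RatFunc K → RatFunc K) (hD : IsDeriv D)
    (hDval : ∀ p : Polynomial K, D (am p) = am (derivative p))
    (f g : Polynomial K) (hg : g ≠ 0) :
    D (am f / am g) = am (g * derivative f - f * derivative g) / am (g * g) := by
  have hg0 : am g ≠ 0 := am_ne_zero hg
  have h1 : am f / am g * am g = am f := div_mul_cancel₀ _ hg0
  have h2 := hD.2 (am f / am g) (am g)
  rw [h1, hDval, hDval] at h2
  field_simp [map_mul, map_sub] at h2 ⊢
  simp only [map_mul, map_sub]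
  linear_combination -h2

/-- Key equivalence between the rational-function Hermite equation and a polynomial identity. -/
theorem ratEq_iff (D : RatFunc K → RatFunc K) (hD : IsDeriv D)
    (hDval : ∀ p : Polynomial K, D (am p) = am (derivative p))
    (P Qs Qneg E B b : Polynomial K) (c : K) (hc : c ≠ 0)
    (hQs : Qs ≠ 0) (hQn : Qneg ≠ 0)
    (hE : E * Qneg = Qs * derivative Qneg) :
    (am P / am (Qs * Qneg) = D (am B / am (C c * Qneg)) + am b / am (C c * Qs)) ↔
      C c * P = Qs * derivative B - E * B + Qneg * b := by
  have hcC : (C c : Polynomial K) ≠ 0 := by simpa using hc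
  have hden : (C c * Qneg : Polynomial K) ≠ 0 := mul_ne_zero hcC hQn
  rw [isDeriv_div D hD hDval B (C c * Qneg) hden]
  have hQ0 : am (Qs * Qneg) ≠ 0 := am_ne_zero (mul_ne_zero hQs hQn)
  have h2 : am ((C c * Qneg) * (C c * Qneg)) ≠ 0 := am_ne_zero (mul_ne_zero hden hden)
  have h3 : am (C c * Qs) ≠ 0 := am_ne_zero (mul_ne_zero hcC hQs)
  rw [div_add_div _ _ h2 h3, div_eq_div_iff hQ0 (mul_ne_zero h2 h3)]
  simp only [← map_mul, ← map_add]
  rw [Function.Injective.eq_iff am_inj]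
  have hd : derivative (C c * Qneg) = C c * derivative Qneg := by
    simp [derivative_mul]
  rw [hd]
  have hF : (C c * C c * Qneg * Qneg * Qs : Polynomial K) ≠ 0 := by
    exact mul_ne_zero (mul_ne_zero (mul_ne_zero (mul_ne_zero hcC hcC) hQn) hQn) hQs
  constructor
  · intro h
    apply mul_left_cancel₀ hF
    linear_combination h + (C c * C c * Qs * Qneg * B) * hE
  · intro h
    linear_combination (C c * C c * Qneg * Qneg * Qs) * h - (C c * C c * Qs * Qneg * B) * hE

end A

section B
variable {K : Type*} [Field K] [CharZero K]

theorem prime_natDegree_pos {p : Polynomial K} (hp : Prime p) : 0 < p.natDegree := by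
  rcases Nat.eq_zero_or_pos p.natDegree with h | h
  · exfalso
    exact hp.not_unit (Polynomial.isUnit_iff_degree_eq_zero.2 (by
      rw [Polynomial.degree_eq_natDegree hp.ne_zero, h]; rfl))
  · exact h

theorem prime_not_dvd_derivative {p : Polynomial K} (hp : Prime p) : ¬ p ∣ derivative p := by
  intro hdvd
  have hd0 : derivative p ≠ 0 := by
    intro h
    have h1 := Polynomial.natDegree_eq_zero_of_derivative_eq_zero h
    have h2 := prime_natDegree_pos hp
    omega
  have h1 := Polynomial.natDegree_le_of_dvd hdvd hd0
  have h2 := Polynomial.natDegree_derivative_lt (p := p) (by have := prime_natDegree_pos hp; omega)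
  omega

/-- Extract the exact power of a prime from a nonzero polynomial. -/
theorem exists_pow_mul_not_dvd {p D : Polynomial K} (hp : Prime p) (hD : D ≠ 0) :
    ∃ n u, D = p ^ n * u ∧ ¬ p ∣ u := by
  by_cases h : p ∣ D
  · obtain ⟨D₁, hD₁eq⟩ := h
    have hD₁ : D₁ ≠ 0 := fun h => hD (by simp [hD₁eq, h])
    have hdeg : D₁.natDegree < D.natDegree := by
      rw [hD₁eq, Polynomial.natDegree_mul hp.ne_zero hD₁]
      have := prime_natDegree_pos hp
      omega
    obtain ⟨n, u, h1, h2⟩ := exists_pow_mul_not_dvd hp hD₁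
    exact ⟨n + 1, u, by rw [hD₁eq, h1]; ring, h2⟩
  · exact ⟨0, D, by simp, h⟩
termination_by D.natDegree
decreasing_by exact hdeg

end B

section C
variable {K : Type*} [Field K] [CharZero K] [DecidableEq K]

set_option maxHeartbeats 1000000 in
/-- Injectivity of the Hermite map over a field, under the coprimality condition. -/
theorem hermite_inj (Qs Qneg E A a : Polynomial K)
    (hQs : Qs ≠ 0) (hQn : Qneg ≠ 0)
    (hE : E * Qneg = Qs * derivative Qneg)
    (hcop : IsCoprime Qs (derivative Qs + E))
    (hA : A.degree < (Qneg.natDegree : WithBot ℕ))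
    (ha : a.degree < (Qs.natDegree : WithBot ℕ))
    (h : Qs * derivative A - E * A + Qneg * a = 0) : A = 0 ∧ a = 0 := by
  have hA0 : A = 0 := by
    by_contra hA0
    -- split off the gcd
    set g := GCDMonoid.gcd A Qneg with hg
    have hgA : g ∣ A := gcd_dvd_left A Qneg
    have hgQ : g ∣ Qneg := gcd_dvd_right A Qneg
    have hgene : g ≠ 0 := gcd_ne_zero_of_right hQn
    set A₁ := A / g with hA₁
    set D := Qneg / g with hD
    have hAg : g * A₁ = A := EuclideanDomain.mul_div_cancel' hgene hgA
    have hQg : g * D = Qneg := EuclideanDomain.mul_div_cancel' hgene hgQ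
    have hcop1 : IsCoprime A₁ D := isCoprime_div_gcd_div_gcd hQn
    have hDne : D ≠ 0 := fun h0 => hQn (by rw [← hQg, h0, mul_zero])
    -- key equation: Qs * (A₁' D - A₁ D') = -(a * D * D)
    have h3 : Qs * (derivative A₁ * D - A₁ * derivative D) = -(a * (D * D)) := by
      apply mul_left_cancel₀ (a := g * g) (mul_ne_zero hgene hgene)
      have e1 : derivative A = derivative g * A₁ + g * derivative A₁ := by
        rw [← hAg]; exact derivative_mul
      have e2 : derivative Qneg = derivative g * D + g * derivative D := by
        rw [← hQg]; exact derivative_mul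
      linear_combination Qneg * h + A * hE - (Qs * g * D) * e1 + (Qs * g * A₁) * e2 +
        (a * (g * D + Qneg) + Qs * derivative A) * hQg - (Qs * derivative Qneg) * hAg
    -- D is a unit
    have hDunit : IsUnit D := by
      by_contra hDu
      obtain ⟨p, hpirr, hpD⟩ := WfDvdMonoid.exists_irreducible_factor hDu hDne
      have hp : Prime p := hpirr.prime
      obtain ⟨n, u, hDeq, hpu⟩ := exists_pow_mul_not_dvd hp hDne
      have hn : 1 ≤ n := by
        by_contra hn
        interval_cases n
        · exact hpu (by rwa [hDeq, pow_zero, one_mul] at hpD)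
      obtain ⟨m, rfl⟩ : ∃ m, n = m + 1 := ⟨n - 1, by omega⟩
      -- W
      set W := derivative A₁ * (p * u) -
        A₁ * ((C ((m : K) + 1)) * derivative p * u + p * derivative u) with hW
      have hfact : derivative A₁ * D - A₁ * derivative D = p ^ m * W := by
        rw [hDeq, hW]
        rw [derivative_mul, derivative_pow_succ]
        push_cast
        ring
      have hpW : ¬ p ∣ W := by
        intro hdvd
        have hkey : p ∣ A₁ * ((C ((m : K) + 1)) * derivative p * u) := by
          have : A₁ * ((C ((m : K) + 1)) * derivative p * u) =
              p * (derivative A₁ * u - A₁ * derivative u) - W := by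
            rw [hW]; ring
          rw [this]
          exact dvd_sub (Dvd.intro _ rfl) hdvd
        rcases hp.dvd_mul.1 hkey with h1 | h1
        · exact hp.not_unit (hcop1.isUnit_of_dvd' h1 hpD)
        rcases hp.dvd_mul.1 h1 with h2 | h2
        swap
        · exact hpu h2
        rcases hp.dvd_mul.1 h2 with h4 | h4
        · exact hp.not_unit (isUnit_of_dvd_unit h4
            (Polynomial.isUnit_C.2 (isUnit_iff_ne_zero.2 (Nat.cast_add_one_ne_zero m))))
        · exact prime_not_dvd_derivative hp h4
      -- p^2 divides Qs
      have hQsW : Qs * W = p ^ (m + 2) * (-(a * (u * u))) := by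
        apply mul_left_cancel₀ (a := p ^ m) (pow_ne_zero _ hp.ne_zero)
        rw [← mul_assoc, mul_comm (p ^ m) Qs, mul_assoc Qs, ← hfact, h3, hDeq]
        ring
      have hp2Qs : p ^ 2 ∣ Qs := by
        refine hp.pow_dvd_of_dvd_mul_right 2 hpW ?_
        rw [hQsW]
        exact Dvd.dvd.mul_right (pow_dvd_pow p (by omega)) _
      obtain ⟨c, hc⟩ := hp2Qs
      have hp2Qs : p ^ 2 ∣ Qs := ⟨c, hc⟩
      have hpdQs : p ∣ derivative Qs := by
        have hdQs : derivative Qs = p * (C ((1 : K) + 1) * derivative p * c + p * derivative c) := by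
          rw [hc, derivative_mul]
          rw [show (2 : ℕ) = 1 + 1 from rfl, derivative_pow_succ]
          push_cast
          ring
        exact ⟨_, hdQs⟩
      -- p divides E
      have hpE : p ∣ E := by
        have hpQneg : p ∣ Qneg := hpD.trans ⟨g, by rw [← hQg]; ring⟩
        obtain ⟨t, w, hQnEq, hpw⟩ := exists_pow_mul_not_dvd hp hQn
        have ht : 1 ≤ t := by
          by_contra htt
          interval_cases t
          · exact hpw (by rwa [hQnEq, pow_zero, one_mul] at hpQneg)
        obtain ⟨s, rfl⟩ : ∃ s, t = s + 1 := ⟨t - 1, by omega⟩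
        have hEpw : E * (p * w) = Qs * ((C ((s : K) + 1)) * derivative p * w + p * derivative w) := by
          apply mul_left_cancel₀ (a := p ^ s) (pow_ne_zero _ hp.ne_zero)
          have h9 := hE
          rw [hQnEq, derivative_mul, derivative_pow_succ] at h9
          linear_combination h9
        have hEw : E * w = p * (c * ((C ((s : K) + 1)) * derivative p * w + p * derivative w)) := by
          apply mul_left_cancel₀ hp.ne_zero
          calc p * (E * w) = E * (p * w) := by ring
            _ = Qs * ((C ((s : K) + 1)) * derivative p * w + p * derivative w) := hEpw
            _ = p * (p * (c * ((C ((s : K) + 1)) * derivative p * w + p * derivative w))) := by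
                rw [hc]; ring
        have : p ∣ E * w := ⟨_, hEw⟩
        rcases hp.dvd_mul.1 this with h1 | h1
        · exact h1
        · exact absurd h1 hpw
      exact hp.not_unit (hcop.isUnit_of_dvd' ((dvd_pow_self p two_ne_zero).trans hp2Qs)
        (dvd_add hpdQs hpE))
    -- conclude degree contradiction
    have hdegg : g.degree = Qneg.degree := by
      rw [← hQg, Polynomial.degree_mul, Polynomial.isUnit_iff_degree_eq_zero.1 hDunit, add_zero]
    have h5 : Qneg.degree ≤ A.degree := hdegg ▸ Polynomial.degree_le_of_dvd hgA hA0
    rw [Polynomial.degree_eq_natDegree hQn] at h5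
    exact absurd (lt_of_le_of_lt h5 hA) (lt_irrefl _)
  subst hA0
  refine ⟨rfl, ?_⟩
  have : Qneg * a = 0 := by simpa using h
  rcases mul_eq_zero.1 this with h1 | h1
  · exact absurd h1 hQn
  · exact h1
end C

section D
variable {K : Type*} [Field K] [DecidableEq K]

/-- Luckiness gives coprimality of `Qs` and `Qs' + E`. -/
theorem coprime_of_lucky (Qs Qneg E : Polynomial K)
    (hQs : Qs ≠ 0) (hQn : Qneg ≠ 0)
    (hE : E * Qneg = Qs * derivative Qneg)
    (hg : (gcd (Qs * Qneg) (derivative (Qs * Qneg))).natDegree = Qneg.natDegree) :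
    IsCoprime Qs (derivative Qs + E) := by
  have hQ0 : Qs * Qneg ≠ 0 := mul_ne_zero hQs hQn
  have hdQ : derivative (Qs * Qneg) = Qneg * (derivative Qs + E) := by
    rw [derivative_mul]
    linear_combination -hE
  set G := gcd (Qs * Qneg) (derivative (Qs * Qneg)) with hG
  have hQnG : Qneg ∣ G := dvd_gcd ⟨Qs, by ring⟩ ⟨derivative Qs + E, hdQ⟩
  have hGne : G ≠ 0 := fun h0 => hQ0 ((gcd_eq_zero_iff _ _).1 h0).1
  obtain ⟨c, hc⟩ := hQnG
  have hcne : c ≠ 0 := fun h0 => hGne (by rw [hc, h0, mul_zero])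
  have hcdeg : c.natDegree = 0 := by
    have := Polynomial.natDegree_mul hQn hcne
    rw [← hc, hg] at this
    omega
  have hcunit : IsUnit c := by
    apply Polynomial.isUnit_iff_degree_eq_zero.2
    rw [Polynomial.degree_eq_natDegree hcne, hcdeg]
    rfl
  have hdvd : Qneg * gcd Qs (derivative Qs + E) ∣ G := by
    apply dvd_gcd
    · calc Qneg * gcd Qs (derivative Qs + E) ∣ Qneg * Qs :=
            mul_dvd_mul_left _ (gcd_dvd_left _ _)
        _ = Qs * Qneg := mul_comm _ _
    · rw [hdQ]
      exact mul_dvd_mul_left Qneg (gcd_dvd_right _ _)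
  rw [hc] at hdvd
  have hdvd2 : gcd Qs (derivative Qs + E) ∣ c := (mul_dvd_mul_iff_left hQn).1 hdvd
  exact (gcd_isUnit_iff _ _).1 (isUnit_of_dvd_unit hdvd2 hcunit)

end D

section E
variable {K : Type*} [Field K] [CharZero K] [DecidableEq K]

set_option maxHeartbeats 1000000 in
set_option maxRecDepth 10000 in
theorem hermite_det_ne_zero (Qs Qneg E : Polynomial K)
    (hQs : Qs ≠ 0) (hQn : Qneg ≠ 0)
    (hE : E * Qneg = Qs * derivative Qneg)
    (hcop : IsCoprime Qs (derivative Qs + E))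
    {dy : ℕ} (hdy : dy = Qs.natDegree + Qneg.natDegree)
    (M : Matrix (Fin dy) (Fin dy) K)
    (hM : ∀ (i j : Fin dy), M i j = if (j : ℕ) < Qneg.natDegree then
        (Qs * derivative (X ^ (j : ℕ)) - E * X ^ (j : ℕ)).coeff i
      else (Qneg * X ^ ((j : ℕ) - Qneg.natDegree)).coeff i) :
    M.det ≠ 0 := by
  intro hdet
  obtain ⟨v, hvne, hv⟩ := Matrix.exists_mulVec_eq_zero_iff.2 hdet
  set dm := Qneg.natDegree with hdm
  set ds := Qs.natDegree with hds
  set A : Polynomial K := ∑ j : Fin dy, if (j : ℕ) < dm then C (v j) * X ^ (j : ℕ) else 0 with hA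
  set a : Polynomial K :=
    ∑ j : Fin dy, if (j : ℕ) < dm then 0 else C (v j) * X ^ ((j : ℕ) - dm) with ha
  -- the combination
  have hdA : derivative A =
      ∑ j : Fin dy, if (j : ℕ) < dm then C (v j) * derivative (X ^ (j : ℕ)) else 0 := by
    rw [hA, map_sum]
    refine Finset.sum_congr rfl fun j _ => ?_
    split_ifs
    · rw [derivative_C_mul]
    · simp
  have hFsum : Qs * derivative A - E * A + Qneg * a = ∑ j : Fin dy, C (v j) *
      (if (j : ℕ) < dm then Qs * derivative (X ^ (j : ℕ)) - E * X ^ (j : ℕ)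
        else Qneg * X ^ ((j : ℕ) - dm)) := by
    rw [hdA, hA, ha, Finset.mul_sum, Finset.mul_sum, Finset.mul_sum,
      ← Finset.sum_sub_distrib, ← Finset.sum_add_distrib]
    refine Finset.sum_congr rfl fun j _ => ?_
    split_ifs with hj
    · ring
    · ring
  -- degrees
  have hdegA : A.degree < (dm : WithBot ℕ) := by
    rw [hA]
    refine lt_of_le_of_lt (Polynomial.degree_sum_le _ _) ?_
    rw [Finset.sup_lt_iff (by exact WithBot.bot_lt_coe dm)]
    intro j _
    split_ifs with hj
    · exact lt_of_le_of_lt (Polynomial.degree_C_mul_X_pow_le _ _) (by exact_mod_cast hj)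
    · rw [Polynomial.degree_zero]; exact WithBot.bot_lt_coe dm
  have hdega : a.degree < (ds : WithBot ℕ) := by
    rw [ha]
    refine lt_of_le_of_lt (Polynomial.degree_sum_le _ _) ?_
    rw [Finset.sup_lt_iff (by exact WithBot.bot_lt_coe ds)]
    intro j _
    split_ifs with hj
    · rw [Polynomial.degree_zero]; exact WithBot.bot_lt_coe ds
    · refine lt_of_le_of_lt (Polynomial.degree_C_mul_X_pow_le _ _) ?_
      have hj2 : (j : ℕ) - dm < ds := by
        have := j.isLt
        omega
      exact_mod_cast hj2
  -- coefficients of F vanish below dy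
  have hcoeff : ∀ i : Fin dy, (Qs * derivative A - E * A + Qneg * a).coeff (i : ℕ) = 0 := by
    intro i
    rw [hFsum, Polynomial.finset_sum_coeff]
    have hterm : ∀ j : Fin dy, (C (v j) *
        (if (j : ℕ) < dm then Qs * derivative (X ^ (j : ℕ)) - E * X ^ (j : ℕ)
          else Qneg * X ^ ((j : ℕ) - dm))).coeff (i : ℕ) = M i j * v j := by
      intro j
      by_cases hj : (j : ℕ) < dm
      · rw [if_pos hj, Polynomial.coeff_C_mul, hM i j, if_pos hj]; ring
      · rw [if_neg hj, Polynomial.coeff_C_mul, hM i j, if_neg hj]; ring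
    rw [Finset.sum_congr rfl fun j _ => hterm j]
    exact congrFun hv i
  -- degree of F is less than dy
  have hdegE : E ≠ 0 → E.natDegree < ds := by
    intro hEne
    have hdQn : derivative Qneg ≠ 0 := by
      intro h0
      rw [h0, mul_zero] at hE
      rcases mul_eq_zero.1 hE with h | h
      · exact hEne h
      · exact hQn h
    have hQnd : Qneg.natDegree ≠ 0 := by
      intro h0
      rw [Polynomial.eq_C_of_natDegree_eq_zero h0] at hdQn
      simp at hdQn
    have h1 : E.natDegree + dm = ds + (derivative Qneg).natDegree := by
      have := congrArg Polynomial.natDegree hE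
      rwa [Polynomial.natDegree_mul hEne hQn, Polynomial.natDegree_mul hQs hdQn] at this
    have h2 := Polynomial.natDegree_derivative_lt hQnd
    omega
  have hdegF : (Qs * derivative A - E * A + Qneg * a).degree < (dy : WithBot ℕ) := by
    have hQsdeg : Qs.degree = (ds : WithBot ℕ) := Polynomial.degree_eq_natDegree hQs
    have hQndeg : Qneg.degree = (dm : WithBot ℕ) := Polynomial.degree_eq_natDegree hQn
    have hcast : ((ds : WithBot ℕ) + (dm : WithBot ℕ)) = (dy : WithBot ℕ) := by
      rw [hdy]; exact_mod_cast (Nat.cast_add ds dm).symm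
    have h1 : (Qs * derivative A).degree < (dy : WithBot ℕ) := by
      rcases eq_or_ne (derivative A) 0 with h0 | h0
      · rw [h0, mul_zero, Polynomial.degree_zero]; exact WithBot.bot_lt_coe dy
      · rw [Polynomial.degree_mul, hQsdeg, ← hcast]
        refine WithBot.add_lt_add_left (by exact WithBot.coe_ne_bot) ?_
        exact lt_of_le_of_lt Polynomial.degree_derivative_le hdegA
    have h2 : (E * A).degree < (dy : WithBot ℕ) := by
      rcases eq_or_ne E 0 with h0 | h0
      · rw [h0, zero_mul, Polynomial.degree_zero]; exact WithBot.bot_lt_coe dy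
      rcases eq_or_ne A 0 with h0' | h0'
      · rw [h0', mul_zero, Polynomial.degree_zero]; exact WithBot.bot_lt_coe dy
      rw [Polynomial.degree_mul, Polynomial.degree_eq_natDegree h0,
        Polynomial.degree_eq_natDegree h0']
      have hEd := hdegE h0
      have hAd : A.natDegree < dm := (Polynomial.natDegree_lt_iff_degree_lt h0').2 hdegA
      rw [hdy]
      exact_mod_cast (by omega : E.natDegree + A.natDegree < ds + dm)
    have h3 : (Qneg * a).degree < (dy : WithBot ℕ) := by
      rcases eq_or_ne a 0 with h0 | h0
      · rw [h0, mul_zero, Polynomial.degree_zero]; exact WithBot.bot_lt_coe dy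
      · rw [Polynomial.degree_mul, hQndeg, Polynomial.degree_eq_natDegree h0, hdy]
        have hadeg : a.natDegree < ds := (Polynomial.natDegree_lt_iff_degree_lt h0).2 hdega
        exact_mod_cast (by omega : dm + a.natDegree < ds + dm)
    refine lt_of_le_of_lt (Polynomial.degree_add_le _ _) (max_lt ?_ h3)
    exact lt_of_le_of_lt (Polynomial.degree_sub_le _ _) (max_lt h1 h2)
  -- F = 0
  have hF0 : Qs * derivative A - E * A + Qneg * a = 0 := by
    by_contra hFne
    have hn : (Qs * derivative A - E * A + Qneg * a).natDegree < dy :=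
      (Polynomial.natDegree_lt_iff_degree_lt hFne).2 hdegF
    have hco := hcoeff ⟨(Qs * derivative A - E * A + Qneg * a).natDegree, hn⟩
    exact hFne (Polynomial.leadingCoeff_eq_zero.mp hco)
  -- injectivity
  obtain ⟨hA0, ha0⟩ := hermite_inj Qs Qneg E A a hQs hQn hE hcop hdegA hdega hF0
  -- conclude v = 0
  apply hvne
  funext j
  by_cases hj : (j : ℕ) < dm
  · have : A.coeff (j : ℕ) = v j := by
      rw [hA, Polynomial.finset_sum_coeff, Finset.sum_eq_single j]
      · rw [if_pos hj, Polynomial.coeff_C_mul, Polynomial.coeff_X_pow, if_pos rfl, mul_one]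
      · intro b _ hbj
        split_ifs with hb
        · rw [Polynomial.coeff_C_mul, Polynomial.coeff_X_pow, if_neg, mul_zero]
          exact fun h => hbj (Fin.ext h.symm)
        · exact Polynomial.coeff_zero _
      · intro h; exact absurd (Finset.mem_univ j) h
    rw [hA0, Polynomial.coeff_zero] at this
    exact this.symm
  · have : a.coeff ((j : ℕ) - dm) = v j := by
      rw [ha, Polynomial.finset_sum_coeff, Finset.sum_eq_single j]
      · rw [if_neg hj, Polynomial.coeff_C_mul, Polynomial.coeff_X_pow, if_pos rfl, mul_one]
      · intro b _ hbj
        split_ifs with hb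
        · exact Polynomial.coeff_zero _
        · rw [Polynomial.coeff_C_mul, Polynomial.coeff_X_pow, if_neg, mul_zero]
          intro h
          have hb' : ¬ (b : ℕ) < dm := hb
          exact hbj (Fin.ext (by omega))
      · intro h; exact absurd (Finset.mem_univ j) h
    rw [ha0, Polynomial.coeff_zero] at this
    exact this.symm

end E

section F
variable {K : Type*} [Field K]
local notation "am" => algebraMap (Polynomial K) (RatFunc K)

theorem ratEq_iff2 (D : RatFunc K → RatFunc K) (hD : IsDeriv D)
    (hDval : ∀ p : Polynomial K, D (am p) = am (derivative p))
    (P Qs Qneg E B b : Polynomial K) (c : K) (hc : c ≠ 0)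
    (hQs : Qs ≠ 0) (hQn : Qneg ≠ 0)
    (hE : E * Qneg = Qs * derivative Qneg) :
    (am P / (am Qs * am Qneg) = D (am B / (am (C c) * am Qneg)) + am b / (am (C c) * am Qs)) ↔
      C c * P = Qs * derivative B - E * B + Qneg * b := by
  rw [← map_mul, ← map_mul, ← map_mul]
  exact ratEq_iff D hD hDval P Qs Qneg E B b c hc hQs hQn hE

end F
/-- Lemma `le:commutative`. Under Hypothesis (H), let `δ = det H(Q)` and let
`B, b ∈ k[x,y]` satisfy `deg_y(B) < d_y⁻`, `deg_y(b) < d_y*`, and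
`P/Q = D_y(B/(δ·Q⁻)) + b/(δ·Q*)`. Let `x₀ ∈ k` be lucky for `Q`. Then `δ(x₀) ≠ 0` and
`(B(x₀,y), b(x₀,y))` is the unique pair of polynomials in `k[y]` of degrees less than `d_y⁻`
and `d_y*` with `P(x₀,y)/Q(x₀,y) = D_y(B(x₀,y)/(δ(x₀)·Q⁻(x₀,y))) + b(x₀,y)/(δ(x₀)·Q*(x₀,y))`. -/
theorem stmt_6 {k : Type*} [Field k] [CharZero k] [DecidableEq k]
    (P Q : Polynomial (Polynomial k))
    (hP : P ≠ 0) (hQ : Q ≠ 0)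
    (hPQdeg : P.degree < Q.degree)
    (hPQcop : IsRelPrime P Q)
    (hQprimY : Q.IsPrimitive)
    (m : ℕ) (hm : 0 < m) (q : Polynomial k) (Qi : ℕ → Polynomial (Polynomial k))
    (hfac : Q = Polynomial.C q * ∏ i ∈ Finset.range m, Qi i ^ (i + 1))
    (hQiprim : ∀ i < m, (Qi i).IsPrimitive)
    (hQisqf : ∀ i < m, Squarefree (Qi i))
    (hQicop : ∀ i < m, ∀ j < m, i ≠ j → IsRelPrime (Qi i) (Qi j))
    (hQim : 0 < (Qi (m - 1)).natDegree)
    (Qs Qneg : Polynomial (Polynomial k))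
    (hQs : Qs = ∏ i ∈ Finset.range m, Qi i)
    (hQneg : Q = Qs * Qneg)
    (E : Polynomial (Polynomial k))
    (hE : E * Qneg = Qs * Polynomial.derivative Qneg)
    (δ : Polynomial k)
    (hδ : δ = (hermiteMat Qs Qneg E Q.natDegree Qneg.natDegree).det)
    (Dy : RatFunc (RatFunc k) → RatFunc (RatFunc k)) (hDy : IsDeriv Dy)
    (hDyval : ∀ A : Polynomial (RatFunc k), Dy (kyToF A) = kyToF (Polynomial.derivative A))
    (B b : Polynomial (Polynomial k))
    (hB : B.degree < (Qneg.natDegree : WithBot ℕ))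
    (hb : b.degree < (Qs.natDegree : WithBot ℕ))
    (heq : toF P / toF Q =
      Dy (toF B / (toF (Polynomial.C δ) * toF Qneg)) +
        toF b / (toF (Polynomial.C δ) * toF Qs))
    (x₀ : k)
    (hlc : Q.leadingCoeff.eval x₀ ≠ 0)
    (hgcd : (gcd (Q.map (Polynomial.evalRingHom x₀))
      ((Polynomial.derivative Q).map (Polynomial.evalRingHom x₀))).natDegree = Qneg.natDegree)
    (Dk : RatFunc k → RatFunc k) (hDk : IsDeriv Dk)
    (hDkval : ∀ p : Polynomial k,
      Dk (algebraMap (Polynomial k) (RatFunc k) p) =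
        algebraMap (Polynomial k) (RatFunc k) (Polynomial.derivative p)) :
    δ.eval x₀ ≠ 0 ∧
    (algebraMap (Polynomial k) (RatFunc k) (P.map (Polynomial.evalRingHom x₀)) /
        algebraMap (Polynomial k) (RatFunc k) (Q.map (Polynomial.evalRingHom x₀)) =
      Dk (algebraMap (Polynomial k) (RatFunc k) (B.map (Polynomial.evalRingHom x₀)) /
          algebraMap (Polynomial k) (RatFunc k)
            (Polynomial.C (δ.eval x₀) * Qneg.map (Polynomial.evalRingHom x₀))) +
        algebraMap (Polynomial k) (RatFunc k) (b.map (Polynomial.evalRingHom x₀)) /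
          algebraMap (Polynomial k) (RatFunc k)
            (Polynomial.C (δ.eval x₀) * Qs.map (Polynomial.evalRingHom x₀))) ∧
    ∀ B' b' : Polynomial k,
      B'.degree < (Qneg.natDegree : WithBot ℕ) →
      b'.degree < (Qs.natDegree : WithBot ℕ) →
      (algebraMap (Polynomial k) (RatFunc k) (P.map (Polynomial.evalRingHom x₀)) /
          algebraMap (Polynomial k) (RatFunc k) (Q.map (Polynomial.evalRingHom x₀)) =
        Dk (algebraMap (Polynomial k) (RatFunc k) B' /
            algebraMap (Polynomial k) (RatFunc k)
              (Polynomial.C (δ.eval x₀) * Qneg.map (Polynomial.evalRingHom x₀))) +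
          algebraMap (Polynomial k) (RatFunc k) b' /
            algebraMap (Polynomial k) (RatFunc k)
              (Polynomial.C (δ.eval x₀) * Qs.map (Polynomial.evalRingHom x₀))) →
      B' = B.map (Polynomial.evalRingHom x₀) ∧ b' = b.map (Polynomial.evalRingHom x₀) := by
  classical
  set evr := Polynomial.evalRingHom (R := k) x₀ with hevr
  have hinjx : Function.Injective (algebraMap (Polynomial k) (RatFunc k)) :=
    IsFractionRing.injective _ _
  have hinjKy : Function.Injective (toKy (k := k)) := Polynomial.map_injective _ hinjx
  have hQs0 : Qs ≠ 0 := fun h => hQ (by rw [hQneg, h, zero_mul])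
  have hQn0 : Qneg ≠ 0 := fun h => hQ (by rw [hQneg, h, mul_zero])
  have htoF : ∀ S : Polynomial (Polynomial k), toF S = kyToF (toKy S) := fun _ => rfl
  have hQky : toKy (k := k) Q ≠ 0 := fun h => hQ (hinjKy (by simpa using h))
  have hPky : toKy (k := k) P ≠ 0 := fun h => hP (hinjKy (by simpa using h))
  -- δ ≠ 0
  have hδne : δ ≠ 0 := by
    intro h0
    rw [h0, Polynomial.C_0, map_zero, zero_mul, zero_mul, div_zero, div_zero,
      isDeriv_zero Dy hDy, add_zero] at heq
    rcases _root_.div_eq_zero_iff.mp heq with h | h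
    · exact hPky (am_inj (K := RatFunc k) (by rw [map_zero]; exact h))
    · exact hQky (am_inj (K := RatFunc k) (by rw [map_zero]; exact h))
  set c : RatFunc k := algebraMap (Polynomial k) (RatFunc k) δ with hc
  have hcne : c ≠ 0 := am_ne_zero hδne
  -- convert heq to a polynomial identity in k[x][y]
  have heC : toF (k := k) (Polynomial.C δ) = kyToF (Polynomial.C c) := by
    rw [htoF]
    exact congrArg _ (Polynomial.map_C _)
  rw [hQneg, map_mul, heC] at heq
  have hdmapQn : toKy (k := k) (Polynomial.derivative Qneg) = Polynomial.derivative (toKy Qneg) :=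
    (Polynomial.derivative_map Qneg _).symm
  have hEky : toKy E * toKy Qneg = toKy Qs * Polynomial.derivative (toKy Qneg) := by
    rw [← map_mul, hE, map_mul, hdmapQn]
  have hQsky : toKy (k := k) Qs ≠ 0 := fun h => hQs0 (hinjKy (by simpa using h))
  have hQnky : toKy (k := k) Qneg ≠ 0 := fun h => hQn0 (hinjKy (by simpa using h))
  have hiff := ratEq_iff2 (K := RatFunc k) Dy hDy hDyval (toKy P) (toKy Qs) (toKy Qneg)
    (toKy E) (toKy B) (toKy b) c hcne hQsky hQnky hEky
  have hkey := hiff.mp heq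
  have hpoly : Polynomial.C δ * P =
      Qs * Polynomial.derivative B - E * B + Qneg * b := by
    apply hinjKy
    rw [map_mul, map_add, map_sub, map_mul, map_mul, map_mul]
    rw [show toKy (k := k) (Polynomial.C δ) = Polynomial.C c from Polynomial.map_C _]
    rw [show toKy (k := k) (Polynomial.derivative B) = Polynomial.derivative (toKy B) from
      (Polynomial.derivative_map B _).symm]
    exact hkey
  -- specialize at x₀
  have hpoly₀ : Polynomial.C (δ.eval x₀) * P.map evr =
      Qs.map evr * Polynomial.derivative (B.map evr) - E.map evr * B.map evr +
        Qneg.map evr * b.map evr := by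
    have := congrArg (Polynomial.map evr) hpoly
    rw [Polynomial.map_mul, Polynomial.map_add, Polynomial.map_sub, Polynomial.map_mul,
      Polynomial.map_mul, Polynomial.map_mul, Polynomial.map_C,
      ← Polynomial.derivative_map] at this
    exact this
  -- degrees of the specialized polynomials
  have hQ₀fac : Q.map evr = Qs.map evr * Qneg.map evr := by rw [hQneg, Polynomial.map_mul]
  have hQ₀lc : (Q.map evr).coeff Q.natDegree ≠ 0 := by
    rw [Polynomial.coeff_map]
    exact hlc
  have hQ₀ne : Q.map evr ≠ 0 := fun h => hQ₀lc (by rw [h, Polynomial.coeff_zero])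
  have hQ₀deg : (Q.map evr).natDegree = Q.natDegree :=
    le_antisymm Polynomial.natDegree_map_le (Polynomial.le_natDegree_of_ne_zero hQ₀lc)
  have hQs₀ne : Qs.map evr ≠ 0 := fun h => hQ₀ne (by rw [hQ₀fac, h, zero_mul])
  have hQn₀ne : Qneg.map evr ≠ 0 := fun h => hQ₀ne (by rw [hQ₀fac, h, mul_zero])
  have hQdeg : Q.natDegree = Qs.natDegree + Qneg.natDegree := by
    rw [hQneg]
    exact Polynomial.natDegree_mul hQs0 hQn0
  have hsum₀ : (Qs.map evr).natDegree + (Qneg.map evr).natDegree = Q.natDegree := by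
    rw [← hQ₀deg, hQ₀fac]
    exact (Polynomial.natDegree_mul hQs₀ne hQn₀ne).symm
  have hQs₀deg : (Qs.map evr).natDegree = Qs.natDegree := by
    have h1 := Polynomial.natDegree_map_le (f := evr) (p := Qs)
    have h2 := Polynomial.natDegree_map_le (f := evr) (p := Qneg)
    omega
  have hQn₀deg : (Qneg.map evr).natDegree = Qneg.natDegree := by
    have h1 := Polynomial.natDegree_map_le (f := evr) (p := Qs)
    have h2 := Polynomial.natDegree_map_le (f := evr) (p := Qneg)
    omega
  -- specialized E-relation and coprimality
  have hE₀ : E.map evr * Qneg.map evr = Qs.map evr * Polynomial.derivative (Qneg.map evr) := by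
    rw [← Polynomial.map_mul, hE, Polynomial.map_mul, ← Polynomial.derivative_map]
  have hcop : IsCoprime (Qs.map evr) (Polynomial.derivative (Qs.map evr) + E.map evr) := by
    apply coprime_of_lucky (Qs.map evr) (Qneg.map evr) (E.map evr) hQs₀ne hQn₀ne hE₀
    rw [← hQ₀fac, Polynomial.derivative_map, hQn₀deg]
    exact hgcd
  -- δ(x₀) ≠ 0
  have hδ₀ : δ.eval x₀ ≠ 0 := by
    have hdet : δ.eval x₀ =
        ((hermiteMat Qs Qneg E Q.natDegree Qneg.natDegree).map evr).det := by
      rw [hδ]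
      exact RingHom.map_det evr _
    rw [hdet]
    refine hermite_det_ne_zero (Qs.map evr) (Qneg.map evr) (E.map evr) hQs₀ne hQn₀ne hE₀ hcop
      (by rw [hQs₀deg, hQn₀deg]; exact hQdeg) _ ?_
    intro i j
    rw [Matrix.map_apply, hQn₀deg]
    unfold hermiteMat
    rw [Matrix.of_apply]
    rw [apply_ite evr]
    split_ifs with hj
    · rw [← Polynomial.coeff_map]
      congr 1
      simp only [Polynomial.map_sub, Polynomial.map_mul, Polynomial.map_pow, Polynomial.map_X,
        ← Polynomial.derivative_map]
    · rw [← Polynomial.coeff_map]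
      congr 1
      simp only [Polynomial.map_mul, Polynomial.map_pow, Polynomial.map_X]
  refine ⟨hδ₀, ?_, ?_⟩
  · -- existence
    rw [hQ₀fac, map_mul, map_mul, map_mul]
    exact (ratEq_iff2 (K := k) Dk hDk hDkval (P.map evr) (Qs.map evr) (Qneg.map evr)
      (E.map evr) (B.map evr) (b.map evr) (δ.eval x₀) hδ₀ hQs₀ne hQn₀ne hE₀).mpr hpoly₀
  · -- uniqueness
    intro B' b' hB' hb' heq'
    rw [hQ₀fac, map_mul, map_mul, map_mul] at heq'
    have h1 := (ratEq_iff2 (K := k) Dk hDk hDkval (P.map evr) (Qs.map evr) (Qneg.map evr)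
      (E.map evr) B' b' (δ.eval x₀) hδ₀ hQs₀ne hQn₀ne hE₀).mp heq'
    have hdiff : Qs.map evr * Polynomial.derivative (B' - B.map evr) -
        E.map evr * (B' - B.map evr) + Qneg.map evr * (b' - b.map evr) = 0 := by
      rw [Polynomial.derivative_sub]
      linear_combination hpoly₀ - h1
    have hdB : (B' - B.map evr).degree < ((Qneg.map evr).natDegree : WithBot ℕ) := by
      rw [hQn₀deg]
      refine lt_of_le_of_lt (Polynomial.degree_sub_le _ _) (max_lt hB' ?_)
      exact lt_of_le_of_lt (Polynomial.degree_map_le) hB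
    have hdb : (b' - b.map evr).degree < ((Qs.map evr).natDegree : WithBot ℕ) := by
      rw [hQs₀deg]
      refine lt_of_le_of_lt (Polynomial.degree_sub_le _ _) (max_lt hb' ?_)
      exact lt_of_le_of_lt (Polynomial.degree_map_le) hb
    obtain ⟨e1, e2⟩ := hermite_inj (Qs.map evr) (Qneg.map evr) (E.map evr) _ _
      hQs₀ne hQn₀ne hE₀ hcop hdB hdb hdiff
    exact ⟨sub_eq_zero.mp e1, sub_eq_zero.mp e2⟩
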